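/- Let x, y ∈ [0,1]^d and for each coordinate i let w_m^{x_i} satisfy the univariate moment property ∫_0^1 w_m^{x_i}(z) z^k dz = x_i^k for all 0 ≤ k ≤ m-1. Let p be a strictly positive density on [0,1]^d and define W_m^x(z) := (∏_{i=1}^d w_m^{x_i}(z_i)) / p(z). Then for every integer ℓ with 2ℓ ≤ m-1, ∫_{[0,1]^d} (‖y - z‖₂²)^ℓ W_m^x(z) p(z) dz = (‖y - x‖₂²)^ℓ. -/

import Mathlib

open MeasureTheory

/-- Univariate moment lemma: if `w` reproduces monomial moments up to degree `m-1`,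
then it reproduces `(y - ·)^n` for `n ≤ m - 1`. -/
lemma stmt7_uni_moment (m : ℕ) (x y : ℝ) (w : ℝ → ℝ) (hwc : Continuous w)
    (hw : ∀ k : ℕ, k ≤ m - 1 → ∫ z in (0:ℝ)..1, w z * z ^ k = x ^ k)
    (n : ℕ) (hn : n ≤ m - 1) :
    ∫ z in (0:ℝ)..1, (y - z) ^ n * w z = (y - x) ^ n := by
  have h1 : ∀ z : ℝ, (y - z) ^ n * w z
      = ∑ k ∈ Finset.range (n+1),
          ((-1:ℝ) ^ (k+n) * y ^ k * n.choose k) * (w z * z ^ (n-k)) := by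
    intro z
    rw [sub_pow, Finset.sum_mul]
    refine Finset.sum_congr rfl fun k _ => by ring
  simp_rw [h1]
  rw [intervalIntegral.integral_finset_sum]
  · have h2 : ∀ k ∈ Finset.range (n+1),
        (∫ z in (0:ℝ)..1, ((-1:ℝ)^(k+n) * y ^ k * n.choose k) * (w z * z ^ (n-k)))
        = ((-1:ℝ)^(k+n) * y ^ k * n.choose k) * x ^ (n-k) := by
      intro k _
      rw [intervalIntegral.integral_const_mul, hw (n-k) (le_trans (Nat.sub_le n k) hn)]
    rw [Finset.sum_congr rfl h2, sub_pow]
    refine Finset.sum_congr rfl fun k _ => by ring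
  · intro k _
    exact (continuous_const.mul (hwc.mul (continuous_pow _))).intervalIntegrable _ _

/-- Rewrite a product over `Fin ℓ` composed with `g` as a product of powers over fibers. -/
lemma stmt7_prod_comp_card {d ℓ : ℕ} (g : Fin ℓ → Fin d) (a : Fin d → ℝ) :
    ∏ j, a (g j) = ∏ i, a i ^ (Finset.univ.filter (fun j => g j = i)).card := by
  rw [← Finset.prod_fiberwise_of_maps_to (fun j _ => Finset.mem_univ (g j)) (fun j => a (g j))]
  refine Finset.prod_congr rfl fun i _ => ?_
  rw [Finset.prod_congr rfl (fun j hj => by rw [(Finset.mem_filter.mp hj).2]),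
    Finset.prod_const]

/-- Expansion of a power of a finite sum over functions `Fin ℓ → Fin d`. -/
lemma stmt7_sum_pow {d : ℕ} (a : Fin d → ℝ) (ℓ : ℕ) :
    (∑ i, a i) ^ ℓ
      = ∑ g : Fin ℓ → Fin d, ∏ i, a i ^ (Finset.univ.filter (fun j => g j = i)).card := by
  rw [Finset.sum_pow']
  rw [Fintype.piFinset_univ]
  exact Finset.sum_congr rfl fun g _ => stmt7_prod_comp_card g a

/-- Indicator of the unit cube factors along coordinates. -/
lemma stmt7_indicator_prod {d : ℕ} (f : Fin d → ℝ → ℝ) (z : Fin d → ℝ) :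
    (Set.Icc (0:Fin d → ℝ) 1).indicator (fun z => ∏ i, f i (z i)) z
      = ∏ i, (Set.Icc (0:ℝ) 1).indicator (f i) (z i) := by
  by_cases hz : z ∈ Set.Icc (0:Fin d → ℝ) 1
  · rw [Set.indicator_of_mem hz]
    rw [Set.mem_Icc] at hz
    refine Finset.prod_congr rfl fun i _ =>
      (Set.indicator_of_mem (Set.mem_Icc.mpr ⟨hz.1 i, hz.2 i⟩) (f i)).symm
  · rw [Set.indicator_of_notMem hz]
    have hex : ∃ i, z i ∉ Set.Icc (0:ℝ) 1 := by
      by_contra h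
      push_neg at h
      simp only [Set.mem_Icc] at h
      exact hz (Set.mem_Icc.mpr ⟨fun i => (h i).1, fun i => (h i).2⟩)
    obtain ⟨i, hi⟩ := hex
    exact (Finset.prod_eq_zero (Finset.mem_univ i) (Set.indicator_of_notMem hi _)).symm

/-- Multivariate moment property of the tensorized weight function
`W_m^x(z) = (∏ i, w_m^{x_i}(z_i)) / p(z)`. -/
theorem stmt7_multivariate_moment (d m : ℕ) (hd : 0 < d)
    (x y : Fin d → ℝ) (hx : x ∈ Set.Icc (0 : Fin d → ℝ) 1) (hy : y ∈ Set.Icc (0 : Fin d → ℝ) 1)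
    (w : Fin d → ℝ → ℝ) (hwc : ∀ i, Continuous (w i))
    (hw : ∀ i, ∀ k : ℕ, k ≤ m - 1 → ∫ z in (0:ℝ)..1, w i z * z ^ k = (x i) ^ k)
    (p : (Fin d → ℝ) → ℝ) (hpm : Measurable p)
    (pmin pmax : ℝ) (hpmin : 0 < pmin)
    (hp : ∀ z ∈ Set.Icc (0 : Fin d → ℝ) 1, pmin ≤ p z ∧ p z ≤ pmax)
    (W : (Fin d → ℝ) → ℝ) (hW : ∀ z, W z = (∏ i, w i (z i)) / p z)
    (ℓ : ℕ) (hℓ : 2 * ℓ ≤ m - 1) (hm : 1 ≤ m) :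
    ∫ z in Set.Icc (0 : Fin d → ℝ) 1,
        (∑ i, (y i - z i) ^ 2) ^ ℓ * W z * p z
      = (∑ i, (y i - x i) ^ 2) ^ ℓ := by
  classical
  -- the fiber-counting function
  set c : (Fin ℓ → Fin d) → Fin d → ℕ :=
    fun g i => (Finset.univ.filter (fun j => g j = i)).card with hc
  have hcle : ∀ (g : Fin ℓ → Fin d) i, 2 * c g i ≤ m - 1 := by
    intro g i
    have h1 : c g i ≤ ℓ := by
      have := Finset.card_filter_le (Finset.univ : Finset (Fin ℓ)) (fun j => g j = i)
      simpa using this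
    omega
  -- Step 1: replace `W z * p z` by the product of the weights on the cube
  have step1 : ∫ z in Set.Icc (0 : Fin d → ℝ) 1,
      (∑ i, (y i - z i) ^ 2) ^ ℓ * W z * p z
      = ∫ z in Set.Icc (0 : Fin d → ℝ) 1,
          (∑ i, (y i - z i) ^ 2) ^ ℓ * ∏ i, w i (z i) := by
    refine setIntegral_congr_fun measurableSet_Icc fun z hz => ?_
    have hpz : p z ≠ 0 := ne_of_gt (lt_of_lt_of_le hpmin (hp z hz).1)
    rw [hW, mul_assoc, div_mul_cancel₀ _ hpz]
  rw [step1]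
  -- Step 2: expand the power of the sum pointwise
  have step2 : ∀ z : Fin d → ℝ,
      (∑ i, (y i - z i) ^ 2) ^ ℓ * ∏ i, w i (z i)
      = ∑ g : Fin ℓ → Fin d, ∏ i, ((y i - z i) ^ (2 * c g i) * w i (z i)) := by
    intro z
    rw [stmt7_sum_pow (fun i => (y i - z i) ^ 2) ℓ, Finset.sum_mul]
    refine Finset.sum_congr rfl fun g _ => ?_
    rw [← Finset.prod_mul_distrib]
    refine Finset.prod_congr rfl fun i _ => ?_
    rw [← pow_mul]
  simp_rw [step2]
  -- Step 3: exchange sum and integral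
  have hint : ∀ g : Fin ℓ → Fin d,
      IntegrableOn (fun z : Fin d → ℝ => ∏ i, ((y i - z i) ^ (2 * c g i) * w i (z i)))
        (Set.Icc (0 : Fin d → ℝ) 1) := by
    intro g
    have hcont : Continuous
        (fun z : Fin d → ℝ => ∏ i, ((y i - z i) ^ (2 * c g i) * w i (z i))) := by
      refine continuous_finset_prod _ fun i _ => ?_
      exact (((continuous_const.sub (continuous_apply i)).pow _).mul
        ((hwc i).comp (continuous_apply i)))
    exact hcont.continuousOn.integrableOn_compact isCompact_Icc
  rw [integral_finset_sum _ (fun g _ => hint g)]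
  -- Step 4: compute each summand via Fubini (tensorization)
  have step4 : ∀ g : Fin ℓ → Fin d,
      ∫ z in Set.Icc (0 : Fin d → ℝ) 1,
          ∏ i, ((y i - z i) ^ (2 * c g i) * w i (z i))
      = ∏ i, (y i - x i) ^ (2 * c g i) := by
    intro g
    rw [← integral_indicator measurableSet_Icc]
    have heq : ∀ z : Fin d → ℝ,
        (Set.Icc (0:Fin d → ℝ) 1).indicator
          (fun z => ∏ i, ((y i - z i) ^ (2 * c g i) * w i (z i))) z
        = ∏ i, (Set.Icc (0:ℝ) 1).indicator
            (fun t => (y i - t) ^ (2 * c g i) * w i t) (z i) :=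
      stmt7_indicator_prod (fun i t => (y i - t) ^ (2 * c g i) * w i t)
    simp_rw [heq]
    rw [MeasureTheory.integral_fintype_prod_volume_eq_prod (𝕜 := ℝ) (ι := Fin d)
      (fun i t => (Set.Icc (0:ℝ) 1).indicator
        (fun t => (y i - t) ^ (2 * c g i) * w i t) t)]
    refine Finset.prod_congr rfl fun i _ => ?_
    rw [integral_indicator measurableSet_Icc, integral_Icc_eq_integral_Ioc,
      ← intervalIntegral.integral_of_le (by norm_num : (0:ℝ) ≤ 1)]
    exact stmt7_uni_moment m (x i) (y i) (w i) (hwc i) (hw i) (2 * c g i) (hcle g i)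
  rw [Finset.sum_congr rfl (fun g _ => step4 g)]
  -- Step 5: reassemble the sum into the power on the right-hand side
  rw [stmt7_sum_pow (fun i => (y i - x i) ^ 2) ℓ]
  refine Finset.sum_congr rfl fun g _ => Finset.prod_congr rfl fun i _ => ?_
  rw [← pow_mul]
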